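/- For integers r ≥ 1, n ≥ 2r, and every 1 ≤ i ≤ r: M(C(2r−i, r)) = C(n−i, r−i) and M(C(2r, r) − C(2r−i, r−i)) = C(n−1, r−1) + C(n−2, r−1) + ⋯ + C(n−i, r−1). -/
import Mathlib


/-- The ground set `[n] = {1, …, n}` as a finset of naturals. -/
def ground (n : ℕ) : Finset ℕ := Finset.Icc 1 n

/-- The nested condition `j ∈ e σ₁ (j+1 ∈ e σ₂ (⋯))` determined by a sequence `σ`
over `{∧, ∨}` (where `false` encodes `∧` and `true` encodes `∨`). -/
def setCond (e : Finset ℕ) : ℕ → List Bool → Bool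
  | j, [] => decide (j ∈ e)
  | j, false :: s => decide (j ∈ e) && setCond e (j + 1) s
  | j, true :: s => decide (j ∈ e) || setCond e (j + 1) s

/-- `Θ_r = Υ_r ∪ {α, ω}` (elements of `Υ_r` are sequences over `{∧, ∨}`, with
`false` encoding `∧` and `true` encoding `∨`). -/
inductive Theta where
  | alpha : Theta
  | seq (σ : List Bool) : Theta
  | omega : Theta

/-- Membership in `Θ_r`: a sequence must contain fewer than `r` symbols `∧`
and fewer than `r` symbols `∨`. -/
def Theta.valid (r : ℕ) : Theta → Prop
  | .seq σ => σ.count false < r ∧ σ.count true < r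
  | _ => True

/-- `T_r(σ)` for `σ ∈ Θ_r`: the `r`-subsets of `[n]` satisfying the nested condition
given by `σ`; `T_r(α) = ∅` and `T_r(ω) = the family of all r-subsets of [n]`. -/
def Theta.Tset (n r : ℕ) : Theta → Finset (Finset ℕ)
  | .alpha => ∅
  | .seq σ => (Finset.powersetCard r (ground n)).filter (fun e => setCond e 1 σ = true)
  | .omega => Finset.powersetCard r (ground n)

/-- Encode the symbols for the lexicographic comparison: `∧ ↦ 0`, `* ↦ 1`, `∨ ↦ 2`. -/
def symCode (b : Bool) : ℕ := if b then 2 else 0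

/-- The order on `Θ_r`: `α` is minimal, `ω` is maximal, and sequences are compared
lexicographically after appending `*`, with `∧ < * < ∨`. -/
def Theta.lt : Theta → Theta → Prop
  | _, .alpha => False
  | .alpha, _ => True
  | .omega, _ => False
  | _, .omega => True
  | .seq σ, .seq τ => List.Lex (· < ·) (σ.map symCode ++ [1]) (τ.map symCode ++ [1])

/-- The position of an element of `Θ_r` in the linear order on `Θ_r`
(the number of elements of `Θ_r` strictly below it; `α` has position `0`). -/
noncomputable def Theta.posOf (r : ℕ) (t : Theta) : ℕ :=
  Set.ncard {x : Theta | x.valid r ∧ x.lt t}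

/-- The blocker `B(F)`: the `r`-subsets of `[n]` meeting every member of `F`. -/
def blockerT (n r : ℕ) (F : Finset (Finset ℕ)) : Finset (Finset ℕ) :=
  (Finset.powersetCard r (ground n)).filter (fun e => ∀ f ∈ F, (e ∩ f).Nonempty)

/-- `σ̄`: interchange `∧` and `∨`; `ᾱ = ω` and `ω̄ = α`. -/
def Theta.bar : Theta → Theta
  | .alpha => .omega
  | .seq σ => .seq (σ.map not)
  | .omega => .alpha

section Aux
open List

@[simp] lemma symCode_false : symCode false = 0 := rfl
@[simp] lemma symCode_true : symCode true = 2 := rfl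

lemma symCode_inj : Function.Injective symCode := by
  intro a b h; cases a <;> cases b <;> simp [symCode] at h ⊢

lemma lex_trans {l₁ l₂ l₃ : List ℕ} (h₁ : List.Lex (· < ·) l₁ l₂) (h₂ : List.Lex (· < ·) l₂ l₃) :
    List.Lex (· < ·) l₁ l₃ := lt_trans (α := List ℕ) h₁ h₂

lemma lex_irrefl (l : List ℕ) : ¬ List.Lex (· < ·) l l := lt_irrefl (α := List ℕ) l

lemma lex_trichotomy (l₁ l₂ : List ℕ) :
    List.Lex (· < ·) l₁ l₂ ∨ l₁ = l₂ ∨ List.Lex (· < ·) l₂ l₁ := lt_trichotomy (α := List ℕ) l₁ l₂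

lemma count_bool (l : List Bool) : l.count true + l.count false = l.length := by
  induction l with
  | nil => simp
  | cons a t ih => cases a <;> simp [List.count_cons] <;> omega

/-- the code of a sequence, as used in the order -/
def tcode (l : List Bool) : List ℕ := l.map symCode ++ [1]

lemma tcode_inj : Function.Injective tcode := by
  intro a b h
  have := List.append_inj_left' h (by simp)
  exact List.map_injective_iff.2 symCode_inj this

lemma theta_lt_trans : ∀ {x y z : Theta}, x.lt y → y.lt z → x.lt z := by
  intro x y z h₁ h₂
  cases x <;> cases y <;> cases z <;>
    simp_all [Theta.lt] <;> exact lex_trans h₁ h₂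

lemma theta_lt_irrefl : ∀ (x : Theta), ¬ x.lt x := by
  intro x
  cases x <;> simp [Theta.lt] <;> exact lex_irrefl _

lemma theta_trichotomy : ∀ (x y : Theta), x.lt y ∨ x = y ∨ y.lt x := by
  intro x y
  cases x <;> cases y <;> simp [Theta.lt]
  rename_i σ τ
  rcases lex_trichotomy (σ.map symCode ++ [1]) (τ.map symCode ++ [1]) with h | h | h
  · exact Or.inl h
  · exact Or.inr (Or.inl (tcode_inj h))
  · exact Or.inr (Or.inr h)

end Aux
section Count

/-- lists with bounded counts -/
def Wlt (a b : ℕ) : Set (List Bool) := {l | l.count false < a ∧ l.count true < b}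

lemma wlt_finite (a b : ℕ) : (Wlt a b).Finite := by
  apply (List.finite_length_le (α := Bool) (a + b)).subset
  intro l hl
  have := count_bool l
  simp only [Wlt, Set.mem_setOf_eq] at hl
  simp only [Set.mem_setOf_eq]
  omega

lemma wlt_zero_left (b : ℕ) : Wlt 0 b = ∅ := by
  ext l; simp [Wlt]

lemma wlt_zero_right (a : ℕ) : Wlt a 0 = ∅ := by
  ext l; simp [Wlt]

lemma wlt_succ (a b : ℕ) :
    Wlt (a+1) (b+1) =
      insert [] ((List.cons false '' Wlt a (b+1)) ∪ (List.cons true '' Wlt (a+1) b)) := by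
  ext l
  simp only [Set.mem_insert_iff, Set.mem_union, Set.mem_image, Wlt, Set.mem_setOf_eq]
  constructor
  · rintro ⟨h1, h2⟩
    match l with
    | [] => exact Or.inl rfl
    | false :: t =>
      refine Or.inr (Or.inl ⟨t, ⟨?_, ?_⟩, rfl⟩) <;> simp [List.count_cons] at h1 h2 ⊢ <;> omega
    | true :: t =>
      refine Or.inr (Or.inr ⟨t, ⟨?_, ?_⟩, rfl⟩) <;> simp [List.count_cons] at h1 h2 ⊢ <;> omega
  · rintro (rfl | ⟨t, ⟨h1, h2⟩, rfl⟩ | ⟨t, ⟨h1, h2⟩, rfl⟩) <;>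
      simp [List.count_cons] <;> omega

lemma wlt_ncard : ∀ a b, (Wlt a b).ncard = Nat.choose (a + b) a - 1 := by
  intro a
  induction a with
  | zero => intro b; rw [wlt_zero_left]; simp
  | succ a iha =>
    intro b
    induction b with
    | zero => rw [wlt_zero_right]; simp
    | succ b ihb =>
      rw [wlt_succ]
      have hfin1 : (List.cons false '' Wlt a (b+1)).Finite := (wlt_finite _ _).image _
      have hfin2 : (List.cons true '' Wlt (a+1) b).Finite := (wlt_finite _ _).image _
      have hdisj : Disjoint (List.cons false '' Wlt a (b+1)) (List.cons true '' Wlt (a+1) b) := by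
        rw [Set.disjoint_left]
        rintro l ⟨t, _, rfl⟩ ⟨t', _, h⟩
        simp at h
      have hne : ([] : List Bool) ∉ (List.cons false '' Wlt a (b+1)) ∪ (List.cons true '' Wlt (a+1) b) := by
        rintro (⟨t, _, h⟩ | ⟨t, _, h⟩) <;> simp at h
      rw [Set.ncard_insert_of_notMem hne (hfin1.union hfin2),
        Set.ncard_union_eq hdisj hfin1 hfin2,
        Set.ncard_image_of_injective _ (fun x y => by simp),
        Set.ncard_image_of_injective _ (fun x y => by simp),
        iha (b+1), ihb]
      have hp : Nat.choose (a + b + 1 + 1) (a + 1) =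
          Nat.choose (a + b + 1) a + Nat.choose (a + b + 1) (a + 1) := Nat.choose_succ_succ _ _
      have h1 : 1 ≤ Nat.choose (a + (b+1)) a := Nat.choose_pos (by omega)
      have h2 : 1 ≤ Nat.choose (a + 1 + b) (a+1) := Nat.choose_pos (by omega)
      simp only [show a + (b + 1) = a + b + 1 from by omega,
        show a + 1 + b = a + b + 1 from by omega,
        show a + 1 + (b + 1) = a + b + 1 + 1 from by omega] at h1 h2 ⊢
      omega

end Count
section Sets

lemma tcode_repF (k : ℕ) :
    (List.replicate k false).map symCode ++ [1] = List.replicate k 0 ++ [1] := by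
  simp [List.map_replicate, symCode]

lemma tcode_repT (k : ℕ) :
    (List.replicate k true).map symCode ++ [1] = List.replicate k 2 ++ [1] := by
  simp [List.map_replicate, symCode]

lemma lex_below_repF_intro (k : ℕ) (t : List ℕ) :
    List.Lex (· < ·) (List.replicate k 0 ++ (0 :: t)) (List.replicate k 0 ++ [1]) :=
  List.Lex.append_left _ (List.Lex.rel (by norm_num)) _

lemma lex_above_repT_intro (k : ℕ) (t : List ℕ) :
    List.Lex (· < ·) (List.replicate k 2 ++ [1]) (List.replicate k 2 ++ (2 :: t)) :=
  List.Lex.append_left _ (List.Lex.rel (by norm_num)) _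

lemma lex_below_repF_elim : ∀ (k : ℕ) (l : List Bool),
    List.Lex (· < ·) (l.map symCode ++ [1]) (List.replicate k 0 ++ [1]) →
    ∃ ρ, l = List.replicate (k+1) false ++ ρ := by
  intro k
  induction k with
  | zero =>
    intro l h
    match l with
    | [] => simp at h
    | b :: t =>
      cases b
      · exact ⟨t, by simp [List.replicate]⟩
      · simp only [List.map_cons, List.cons_append, List.replicate, List.nil_append] at h
        cases h with
        | rel h => simp [symCode] at h
  | succ k ih =>
    intro l h
    match l with
    | [] =>
      simp only [List.map_nil, List.nil_append, List.replicate_succ, List.cons_append] at h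
      cases h with
      | rel h => omega
    | b :: t =>
      simp only [List.map_cons, List.cons_append, List.replicate_succ, List.cons_append] at h
      cases b
      · simp only [symCode, if_neg Bool.false_ne_true, if_false] at h
        have h' : List.Lex (· < ·) (t.map symCode ++ [1]) (List.replicate k 0 ++ [1]) := by
          cases h with
          | cons h => exact h
          | rel h => omega
        obtain ⟨ρ, hρ⟩ := ih t h'
        exact ⟨ρ, by simp [List.replicate_succ, hρ]⟩
      · exfalso
        simp only [symCode, if_pos rfl] at h
        cases h with
        | rel h => omega


end Sets
section Sets2

lemma lex_above_repT_elim : ∀ (k : ℕ) (l : List Bool),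
    List.Lex (· < ·) (List.replicate k 2 ++ [1]) (l.map symCode ++ [1]) →
    ∃ ρ, l = List.replicate (k+1) true ++ ρ := by
  intro k
  induction k with
  | zero =>
    intro l h
    match l with
    | [] => simp at h
    | b :: t =>
      cases b
      · simp only [List.map_cons, List.cons_append, List.replicate, List.nil_append,
          symCode_false] at h
        cases h with
        | rel h => omega
      · exact ⟨t, by simp [List.replicate]⟩
  | succ k ih =>
    intro l h
    match l with
    | [] =>
      simp only [List.map_nil, List.nil_append, List.replicate_succ, List.cons_append] at h
      cases h with
      | rel h => omega
    | b :: t =>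
      simp only [List.map_cons, List.cons_append, List.replicate_succ, List.cons_append] at h
      cases b
      · simp only [symCode_false] at h
        cases h with
        | rel h => omega
      · simp only [symCode_true] at h
        have h' : List.Lex (· < ·) (List.replicate k 2 ++ [1]) (t.map symCode ++ [1]) := by
          cases h with
          | cons h => exact h
          | rel h => omega
        obtain ⟨ρ, hρ⟩ := ih t h'
        exact ⟨ρ, by simp [List.replicate_succ, hρ]⟩

/-- Description of the set of valid elements below `∧^k`. -/
lemma below_repF (r k : ℕ) :
    {x : Theta | x.valid r ∧ x.lt (.seq (List.replicate k false))} =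
      insert Theta.alpha
        ((fun ρ => Theta.seq (List.replicate (k+1) false ++ ρ)) '' Wlt (r - (k+1)) r) := by
  ext x
  simp only [Set.mem_setOf_eq, Set.mem_insert_iff, Set.mem_image]
  constructor
  · rintro ⟨hv, hlt⟩
    cases x with
    | alpha => exact Or.inl rfl
    | omega => exact absurd hlt (by simp [Theta.lt])
    | seq l =>
      refine Or.inr ?_
      simp only [Theta.lt, tcode_repF] at hlt
      obtain ⟨ρ, rfl⟩ := lex_below_repF_elim k l hlt
      refine ⟨ρ, ⟨?_, ?_⟩, rfl⟩ <;>
        · obtain ⟨h1, h2⟩ := hv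
          simp [List.count_append, List.count_replicate] at h1 h2
          omega
  · rintro (rfl | ⟨ρ, ⟨h1, h2⟩, rfl⟩)
    · exact ⟨trivial, trivial⟩
    · refine ⟨⟨?_, ?_⟩, ?_⟩
      · simp only [Theta.valid, List.count_append, List.count_replicate]
        simp
        omega
      · simp only [Theta.valid, List.count_append, List.count_replicate]
        simp
        omega
      · show List.Lex _ _ _
        rw [tcode_repF]
        simp only [List.map_append, List.map_replicate, List.append_assoc]
        have : (List.replicate (k+1) (symCode false) : List ℕ) = List.replicate k 0 ++ [0] := by
          simp [symCode, List.replicate_succ']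
        rw [this, List.append_assoc]
        exact lex_below_repF_intro k _


/-- Description of the set of valid elements above `∨^k`. -/
lemma above_repT (r k : ℕ) :
    {x : Theta | x.valid r ∧ (Theta.seq (List.replicate k true)).lt x} =
      insert Theta.omega
        ((fun ρ => Theta.seq (List.replicate (k+1) true ++ ρ)) '' Wlt r (r - (k+1))) := by
  ext x
  simp only [Set.mem_setOf_eq, Set.mem_insert_iff, Set.mem_image]
  constructor
  · rintro ⟨hv, hlt⟩
    cases x with
    | omega => exact Or.inl rfl
    | alpha => exact absurd hlt (by simp [Theta.lt])
    | seq l =>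
      refine Or.inr ?_
      simp only [Theta.lt, tcode_repT] at hlt
      obtain ⟨ρ, rfl⟩ := lex_above_repT_elim k l hlt
      refine ⟨ρ, ⟨?_, ?_⟩, rfl⟩ <;>
        · obtain ⟨h1, h2⟩ := hv
          simp [List.count_append, List.count_replicate] at h1 h2
          omega
  · rintro (rfl | ⟨ρ, ⟨h1, h2⟩, rfl⟩)
    · exact ⟨trivial, trivial⟩
    · refine ⟨⟨?_, ?_⟩, ?_⟩
      · simp only [Theta.valid, List.count_append, List.count_replicate]
        simp
        omega
      · simp only [Theta.valid, List.count_append, List.count_replicate]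
        simp
        omega
      · show List.Lex _ _ _
        rw [tcode_repT]
        simp only [List.map_append, List.map_replicate, List.append_assoc]
        have : (List.replicate (k+1) (symCode true) : List ℕ) = List.replicate k 2 ++ [2] := by
          simp [symCode, List.replicate_succ']
        rw [this, List.append_assoc]
        exact lex_above_repT_intro k _


/-- The set of valid elements. -/
lemma valid_set (r : ℕ) :
    {x : Theta | x.valid r} =
      insert Theta.alpha (insert Theta.omega (Theta.seq '' Wlt r r)) := by
  ext x
  cases x with
  | alpha => simp [Theta.valid]
  | omega => simp [Theta.valid]
  | seq l =>
    simp only [Set.mem_setOf_eq, Set.mem_insert_iff, Set.mem_image]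
    constructor
    · rintro ⟨h1, h2⟩
      exact Or.inr (Or.inr ⟨l, ⟨h1, h2⟩, rfl⟩)
    · rintro (h | h | ⟨t, ht, h⟩)
      · exact absurd h (by simp)
      · exact absurd h (by simp)
      · cases h; exact ht

lemma valid_finite (r : ℕ) : {x : Theta | x.valid r}.Finite := by
  rw [valid_set]
  exact (((wlt_finite r r).image _).insert _).insert _

end Sets2
section Pos

lemma seq_prefix_inj (p : List Bool) :
    Function.Injective (fun ρ => Theta.seq (p ++ ρ)) := by
  intro a b h
  exact List.append_cancel_left (Theta.seq.inj h)

lemma posOf_repF (r k : ℕ) (hk : k < r) :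
    Theta.posOf r (.seq (List.replicate k false)) = Nat.choose (2*r - (k+1)) (r - (k+1)) := by
  unfold Theta.posOf
  rw [below_repF]
  rw [Set.ncard_insert_of_notMem (by rintro ⟨ρ, _, h⟩; cases h) ((wlt_finite _ _).image _),
    Set.ncard_image_of_injective _ (seq_prefix_inj _), wlt_ncard]
  have hpos : 0 < Nat.choose ((r-(k+1)) + r) (r-(k+1)) := Nat.choose_pos (by omega)
  have he : (r-(k+1)) + r = 2*r - (k+1) := by omega
  rw [he] at hpos ⊢
  omega

lemma ncard_valid (r : ℕ) : {x : Theta | x.valid r}.ncard = Nat.choose (2*r) r + 1 := by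
  rw [valid_set]
  have hfin : (Theta.seq '' Wlt r r).Finite := (wlt_finite _ _).image _
  rw [Set.ncard_insert_of_notMem (by rintro (h | ⟨ρ, _, h⟩) <;> cases h) (hfin.insert _),
      Set.ncard_insert_of_notMem (by rintro ⟨ρ, _, h⟩; cases h) hfin,
      Set.ncard_image_of_injective _ (fun a b h => Theta.seq.inj h), wlt_ncard]
  have hpos : 0 < Nat.choose (r+r) r := Nat.choose_pos (by omega)
  have he : r + r = 2*r := by omega
  rw [he] at hpos ⊢
  omega

lemma posOf_eq_total_sub (r : ℕ) (t : Theta) (ht : t.valid r) :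
    Theta.posOf r t + 1 + {x : Theta | x.valid r ∧ t.lt x}.ncard
      = {x : Theta | x.valid r}.ncard := by
  have hfin := valid_finite r
  have hb : {x : Theta | x.valid r ∧ x.lt t}.Finite := hfin.subset (fun x hx => hx.1)
  have ha : {x : Theta | x.valid r ∧ t.lt x}.Finite := hfin.subset (fun x hx => hx.1)
  have hset : {x : Theta | x.valid r} =
      {x : Theta | x.valid r ∧ x.lt t} ∪ ({t} ∪ {x : Theta | x.valid r ∧ t.lt x}) := by
    ext x
    simp only [Set.mem_setOf_eq, Set.mem_union, Set.mem_singleton_iff]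
    constructor
    · intro hv
      rcases theta_trichotomy x t with h | rfl | h
      · exact Or.inl ⟨hv, h⟩
      · exact Or.inr (Or.inl rfl)
      · exact Or.inr (Or.inr ⟨hv, h⟩)
    · rintro (⟨h, _⟩ | rfl | ⟨h, _⟩)
      · exact h
      · exact ht
      · exact h
  have hd1 : Disjoint {x : Theta | x.valid r ∧ x.lt t}
      ({t} ∪ {x : Theta | x.valid r ∧ t.lt x}) := by
    rw [Set.disjoint_left]
    rintro x ⟨_, hx⟩ (rfl | ⟨_, hx'⟩)
    · exact theta_lt_irrefl _ hx
    · exact theta_lt_irrefl _ (theta_lt_trans hx hx')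
  have hd2 : Disjoint ({t} : Set Theta) {x : Theta | x.valid r ∧ t.lt x} := by
    rw [Set.disjoint_left]
    rintro x rfl ⟨_, hx⟩
    exact theta_lt_irrefl _ hx
  rw [hset, Set.ncard_union_eq hd1 hb ((Set.finite_singleton t).union ha),
    Set.ncard_union_eq hd2 (Set.finite_singleton t) ha, Set.ncard_singleton]
  unfold Theta.posOf
  omega

lemma posOf_repT (r k : ℕ) (hk : k < r) :
    Theta.posOf r (.seq (List.replicate k true))
      = Nat.choose (2*r) r - Nat.choose (2*r - (k+1)) r := by
  have hv : (Theta.seq (List.replicate k true)).valid r := by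
    constructor <;> simp [List.count_replicate] <;> omega
  have h := posOf_eq_total_sub r _ hv
  rw [ncard_valid] at h
  have habove : {x : Theta | x.valid r ∧ (Theta.seq (List.replicate k true)).lt x}.ncard
      = Nat.choose (2*r - (k+1)) r := by
    rw [above_repT]
    rw [Set.ncard_insert_of_notMem (by rintro ⟨ρ, _, h⟩; cases h) ((wlt_finite _ _).image _),
      Set.ncard_image_of_injective _ (seq_prefix_inj _), wlt_ncard]
    have hpos : 0 < Nat.choose (r + (r-(k+1))) r := Nat.choose_pos (by omega)
    have he : r + (r-(k+1)) = 2*r - (k+1) := by omega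
    rw [he] at hpos ⊢
    omega
  rw [habove] at h
  have hle : Nat.choose (2*r - (k+1)) r ≤ Nat.choose (2*r) r :=
    Nat.choose_le_choose r (by omega)
  omega

/-- Strict monotonicity, hence injectivity, of posOf on valid elements. -/
lemma posOf_strictMono {r : ℕ} {x y : Theta} (hx : x.valid r) (hxy : x.lt y) :
    Theta.posOf r x < Theta.posOf r y := by
  have hfin : {z : Theta | z.valid r ∧ z.lt y}.Finite :=
    (valid_finite r).subset (fun z hz => hz.1)
  apply Set.ncard_lt_ncard _ hfin
  constructor
  · rintro z ⟨hv, hz⟩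
    exact ⟨hv, theta_lt_trans hz hxy⟩
  · intro hsub
    have : x ∈ {z : Theta | z.valid r ∧ z.lt y} := ⟨hx, hxy⟩
    have hmem := hsub this
    exact theta_lt_irrefl x hmem.2

lemma posOf_inj {r : ℕ} {x y : Theta} (hx : x.valid r) (hy : y.valid r)
    (h : Theta.posOf r x = Theta.posOf r y) : x = y := by
  rcases theta_trichotomy x y with hlt | rfl | hlt
  · exact absurd h (Nat.ne_of_lt (posOf_strictMono hx hlt))
  · rfl
  · exact absurd h.symm (Nat.ne_of_lt (posOf_strictMono hy hlt))

end Pos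
section Tsets

lemma setCond_repF (e : Finset ℕ) : ∀ (k j : ℕ),
    setCond e j (List.replicate k false) = true ↔ (∀ m, j ≤ m → m ≤ j + k → m ∈ e) := by
  intro k
  induction k with
  | zero =>
    intro j
    simp only [List.replicate, setCond, decide_eq_true_eq]
    constructor
    · intro h m h1 h2; have : m = j := by omega
      subst this; exact h
    · intro h; exact h j le_rfl (by omega)
  | succ k ih =>
    intro j
    simp only [List.replicate_succ, setCond, Bool.and_eq_true, decide_eq_true_eq, ih (j+1)]
    constructor
    · rintro ⟨h1, h2⟩ m hm1 hm2
      rcases Nat.eq_or_lt_of_le hm1 with rfl | h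
      · exact h1
      · exact h2 m (by omega) (by omega)
    · intro h
      exact ⟨h j le_rfl (by omega), fun m h1 h2 => h m (by omega) (by omega)⟩

lemma setCond_repT (e : Finset ℕ) : ∀ (k j : ℕ),
    setCond e j (List.replicate k true) = true ↔ (∃ m, j ≤ m ∧ m ≤ j + k ∧ m ∈ e) := by
  intro k
  induction k with
  | zero =>
    intro j
    simp only [List.replicate, setCond, decide_eq_true_eq]
    constructor
    · intro h; exact ⟨j, le_rfl, by omega, h⟩
    · rintro ⟨m, h1, h2, h3⟩; have : m = j := by omega
      subst this; exact h3
  | succ k ih =>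
    intro j
    simp only [List.replicate_succ, setCond, Bool.or_eq_true, decide_eq_true_eq, ih (j+1)]
    constructor
    · rintro (h | ⟨m, h1, h2, h3⟩)
      · exact ⟨j, le_rfl, by omega, h⟩
      · exact ⟨m, by omega, by omega, h3⟩
    · rintro ⟨m, h1, h2, h3⟩
      rcases Nat.eq_or_lt_of_le h1 with rfl | h
      · exact Or.inl h3
      · exact Or.inr ⟨m, by omega, by omega, h3⟩

lemma mem_Tset_repF {n r i : ℕ} (hi1 : 1 ≤ i) (e : Finset ℕ) :
    e ∈ (Theta.seq (List.replicate (i-1) false)).Tset n r ↔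
      e ⊆ Finset.Icc 1 n ∧ e.card = r ∧ Finset.Icc 1 i ⊆ e := by
  simp only [Theta.Tset, ground, Finset.mem_filter, Finset.mem_powersetCard, setCond_repF]
  constructor
  · rintro ⟨⟨h1, h2⟩, h3⟩
    refine ⟨h1, h2, fun m hm => ?_⟩
    rw [Finset.mem_Icc] at hm
    exact h3 m hm.1 (by omega)
  · rintro ⟨h1, h2, h3⟩
    exact ⟨⟨h1, h2⟩, fun m hm1 hm2 => h3 (Finset.mem_Icc.2 ⟨hm1, by omega⟩)⟩

lemma mem_Tset_repT {n r i : ℕ} (hi1 : 1 ≤ i) (e : Finset ℕ) :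
    e ∈ (Theta.seq (List.replicate (i-1) true)).Tset n r ↔
      e ⊆ Finset.Icc 1 n ∧ e.card = r ∧ ∃ m, 1 ≤ m ∧ m ≤ i ∧ m ∈ e := by
  simp only [Theta.Tset, ground, Finset.mem_filter, Finset.mem_powersetCard, setCond_repT]
  constructor
  · rintro ⟨⟨h1, h2⟩, m, hm1, hm2, hm3⟩
    exact ⟨h1, h2, m, hm1, by omega, hm3⟩
  · rintro ⟨h1, h2, m, hm1, hm2, hm3⟩
    exact ⟨⟨h1, h2⟩, m, hm1, by omega, hm3⟩

lemma card_Tset_repF {n r i : ℕ} (hr : 1 ≤ r) (hn : 2*r ≤ n) (hi1 : 1 ≤ i) (hi2 : i ≤ r) :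
    ((Theta.seq (List.replicate (i-1) false)).Tset n r).card = Nat.choose (n-i) (r-i) := by
  have hin : i ≤ n := by omega
  have hcardA : (Finset.Icc 1 i).card = i := by rw [Nat.card_Icc]; omega
  have hkey : ((Theta.seq (List.replicate (i-1) false)).Tset n r).card
      = (Finset.powersetCard (r-i) (Finset.Icc (i+1) n)).card := by
    apply Finset.card_bij' (fun e _ => e \ Finset.Icc 1 i) (fun e _ => e ∪ Finset.Icc 1 i)
    · intro e he
      rw [mem_Tset_repF hi1] at he
      obtain ⟨h1, h2, h3⟩ := he
      rw [Finset.mem_powersetCard]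
      constructor
      · intro x hx
        rw [Finset.mem_sdiff] at hx
        have hx1 := h1 hx.1
        rw [Finset.mem_Icc] at hx1 ⊢
        have := hx.2
        rw [Finset.mem_Icc] at this
        omega
      · rw [Finset.card_sdiff_of_subset h3, hcardA, h2]
    · intro e he
      rw [Finset.mem_powersetCard] at he
      obtain ⟨h1, h2⟩ := he
      have hdisj : Disjoint e (Finset.Icc 1 i) := by
        rw [Finset.disjoint_left]
        intro x hx hx'
        have := h1 hx
        rw [Finset.mem_Icc] at this hx'
        omega
      rw [mem_Tset_repF hi1]
      refine ⟨?_, ?_, Finset.subset_union_right⟩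
      · intro x hx
        rcases Finset.mem_union.1 hx with h | h
        · have := h1 h
          rw [Finset.mem_Icc] at this ⊢
          omega
        · have := h
          rw [Finset.mem_Icc] at this ⊢
          omega
      · rw [Finset.card_union_of_disjoint hdisj, h2, hcardA]
        omega
    · intro e he
      rw [mem_Tset_repF hi1] at he
      exact Finset.sdiff_union_of_subset he.2.2
    · intro e he
      rw [Finset.mem_powersetCard] at he
      have hdisj : Disjoint e (Finset.Icc 1 i) := by
        rw [Finset.disjoint_left]
        intro x hx hx'
        have := he.1 hx
        rw [Finset.mem_Icc] at this hx'
        omega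
      exact Finset.union_sdiff_cancel_right hdisj
  rw [hkey, Finset.card_powersetCard, Nat.card_Icc]
  congr 1
  omega

lemma card_Tset_repT {n r i : ℕ} (hr : 1 ≤ r) (hn : 2*r ≤ n) (hi1 : 1 ≤ i) (hi2 : i ≤ r) :
    ((Theta.seq (List.replicate (i-1) true)).Tset n r).card
      = Nat.choose n r - Nat.choose (n-i) r := by
  have hin : i ≤ n := by omega
  classical
  set s := Finset.powersetCard r (ground n) with hs
  set p : Finset ℕ → Prop := fun e => setCond e 1 (List.replicate (i-1) true) = true with hp
  have htot := Finset.card_filter_add_card_filter_not (s := s) (p := p)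
  have hTset : (Theta.seq (List.replicate (i-1) true)).Tset n r = s.filter p := rfl
  have hneg : s.filter (fun e => ¬ p e) = Finset.powersetCard r (Finset.Icc (i+1) n) := by
    ext e
    simp only [Finset.mem_filter, hp, hs, ground, Finset.mem_powersetCard, setCond_repT]
    constructor
    · rintro ⟨⟨h1, h2⟩, h3⟩
      refine ⟨fun x hx => ?_, h2⟩
      have hx1 := h1 hx
      rw [Finset.mem_Icc] at hx1 ⊢
      by_cases hxi : x ≤ i
      · exact absurd ⟨x, by omega, by omega, hx⟩ h3
      · omega
    · rintro ⟨h1, h2⟩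
      refine ⟨⟨fun x hx => ?_, h2⟩, ?_⟩
      · have := h1 hx
        rw [Finset.mem_Icc] at this ⊢
        omega
      · rintro ⟨m, hm1, hm2, hm3⟩
        have := h1 hm3
        rw [Finset.mem_Icc] at this
        omega
  have hcards : s.card = Nat.choose n r := by
    rw [hs, ground, Finset.card_powersetCard, Nat.card_Icc]
    norm_num
  have hcardneg : (s.filter (fun e => ¬ p e)).card = Nat.choose (n-i) r := by
    rw [hneg, Finset.card_powersetCard, Nat.card_Icc]
    congr 1; omega
  rw [hTset]
  omega

lemma sum_choose_tail (n r : ℕ) (hr : 1 ≤ r) :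
    ∀ i, i ≤ n → ∑ j ∈ Finset.Icc 1 i, Nat.choose (n-j) (r-1)
      = Nat.choose n r - Nat.choose (n-i) r := by
  intro i
  induction i with
  | zero => intro _; simp
  | succ i ih =>
    intro hin
    obtain ⟨k, rfl⟩ : ∃ k, r = k + 1 := ⟨r - 1, by omega⟩
    rw [Finset.sum_Icc_succ_top (by omega : 1 ≤ i + 1), ih (by omega)]
    have h1 : n - i = (n - (i+1)) + 1 := by omega
    have hA : Nat.choose (n-i) (k+1)
        = Nat.choose (n-(i+1)) k + Nat.choose (n-(i+1)) (k+1) := by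
      rw [h1]; exact Nat.choose_succ_succ _ _
    have hB : Nat.choose (n-i) (k+1) ≤ Nat.choose n (k+1) :=
      Nat.choose_le_choose _ (by omega)
    simp only [Nat.add_sub_cancel]
    omega
end Tsets

/-- `M(C(2r−i, r)) = C(n−i, r−i)` and
`M(C(2r, r) − C(2r−i, r−i)) = C(n−1, r−1) + ⋯ + C(n−i, r−1)`, where `M(p)` is the
size of `T_r` of the element of `Θ_r` at position `p` in the linear order on `Θ_r`. -/
theorem stmt16 (r n i : ℕ) (hr : 1 ≤ r) (hn : 2 * r ≤ n) (hi1 : 1 ≤ i) (hi2 : i ≤ r)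
    (σ τ : Theta) (hσv : σ.valid r) (hτv : τ.valid r)
    (hσ : Theta.posOf r σ = Nat.choose (2 * r - i) r)
    (hτ : Theta.posOf r τ = Nat.choose (2 * r) r - Nat.choose (2 * r - i) (r - i)) :
    (σ.Tset n r).card = Nat.choose (n - i) (r - i) ∧
    (τ.Tset n r).card = ∑ j ∈ Finset.Icc 1 i, Nat.choose (n - j) (r - 1) := by
  have hk : i - 1 < r := by omega
  have hsymm : Nat.choose (2*r - i) (r - i) = Nat.choose (2*r - i) r := by
    have h2 : 2*r - i - r = r - i := by omega
    rw [← h2]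
    exact Nat.choose_symm (by omega)
  have hσ0v : (Theta.seq (List.replicate (i-1) false)).valid r := by
    constructor <;> simp [List.count_replicate] <;> omega
  have hτ0v : (Theta.seq (List.replicate (i-1) true)).valid r := by
    constructor <;> simp [List.count_replicate] <;> omega
  have hposF : Theta.posOf r (.seq (List.replicate (i-1) false)) = Nat.choose (2*r - i) r := by
    rw [posOf_repF r (i-1) hk, show i - 1 + 1 = i from by omega, hsymm]
  have hposT : Theta.posOf r (.seq (List.replicate (i-1) true))
      = Nat.choose (2*r) r - Nat.choose (2*r - i) (r - i) := by
    rw [posOf_repT r (i-1) hk, show i - 1 + 1 = i from by omega, hsymm]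
  have hσeq : σ = Theta.seq (List.replicate (i-1) false) :=
    posOf_inj hσv hσ0v (by rw [hσ, hposF])
  have hτeq : τ = Theta.seq (List.replicate (i-1) true) :=
    posOf_inj hτv hτ0v (by rw [hτ, hposT])
  subst hσeq hτeq
  refine ⟨card_Tset_repF hr hn hi1 hi2, ?_⟩
  rw [card_Tset_repT hr hn hi1 hi2, sum_choose_tail n r hr i (by omega)]
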